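/- Let μ be a partition of a positive integer d, F a field of characteristic zero, G a group, and ρ, ρ' : G → GL_n(F) two representations such that tr ρ(g) = tr ρ'(g) for all g ∈ G. Then tr (𝕊_μρ)(g) = tr (𝕊_μρ')(g) for all g ∈ G, where 𝕊_μρ denotes the representation of G on 𝕊_μ(F^n) induced by ρ. -/

import Mathlib

open scoped TensorProduct

/-- Parts of the partition `μ` listed in (weakly) decreasing order; the canonical Young
tableau of shape `μ` has rows of these lengths, with boxes numbered consecutively along rows. -/
def canonicalParts {d : ℕ} (μ : Nat.Partition d) : List ℕ :=
  (μ.parts.sort (· ≤ ·)).reverse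

/-- The row (numbered from `0`) of the box labelled `i` in the canonical Young tableau. -/
def rowIndex {d : ℕ} (μ : Nat.Partition d) (i : ℕ) : ℕ :=
  ((List.range (canonicalParts μ).length).filter
    fun r => ((canonicalParts μ).take (r + 1)).sum ≤ i).length

/-- The column (numbered from `0`) of the box labelled `i` in the canonical Young tableau. -/
def colIndex {d : ℕ} (μ : Nat.Partition d) (i : ℕ) : ℕ :=
  i - ((canonicalParts μ).take (rowIndex μ i)).sum

/-- The row stabilizer `P_μ ⊆ 𝔖_d` of the canonical Young tableau of shape `μ`. -/
def rowStabilizer {d : ℕ} (μ : Nat.Partition d) : Finset (Equiv.Perm (Fin d)) :=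
  Finset.univ.filter fun σ => ∀ i : Fin d, rowIndex μ (σ i) = rowIndex μ (i : ℕ)

/-- The column stabilizer `Q_μ ⊆ 𝔖_d` of the canonical Young tableau of shape `μ`. -/
def colStabilizer {d : ℕ} (μ : Nat.Partition d) : Finset (Equiv.Perm (Fin d)) :=
  Finset.univ.filter fun σ => ∀ i : Fin d, colIndex μ (σ i) = colIndex μ (i : ℕ)

/-- `a_μ = Σ_{σ ∈ P_μ} σ` in the integral group ring `ℤ[𝔖_d]`. -/
noncomputable def rowSymmetrizer {d : ℕ} (μ : Nat.Partition d) :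
    MonoidAlgebra ℤ (Equiv.Perm (Fin d)) :=
  ∑ σ ∈ rowStabilizer μ, MonoidAlgebra.of ℤ (Equiv.Perm (Fin d)) σ

/-- `b_μ = Σ_{σ ∈ Q_μ} sgn(σ)·σ` in the integral group ring `ℤ[𝔖_d]`. -/
noncomputable def colSymmetrizer {d : ℕ} (μ : Nat.Partition d) :
    MonoidAlgebra ℤ (Equiv.Perm (Fin d)) :=
  ∑ σ ∈ colStabilizer μ, (Equiv.Perm.sign σ : ℤ) • MonoidAlgebra.of ℤ (Equiv.Perm (Fin d)) σ

/-- The Young symmetrizer `c_μ = a_μ · b_μ ∈ ℤ[𝔖_d]`. -/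
noncomputable def youngSymmetrizer {d : ℕ} (μ : Nat.Partition d) :
    MonoidAlgebra ℤ (Equiv.Perm (Fin d)) :=
  rowSymmetrizer μ * colSymmetrizer μ

/-- The place-permutation operator `P_σ` on `M^{⊗d}`, determined by
`P_σ (m₁ ⊗ ⋯ ⊗ m_d) = m_{σ(1)} ⊗ ⋯ ⊗ m_{σ(d)}`. -/
noncomputable def placePerm (R : Type*) [CommRing R] (M : Type*) [AddCommGroup M] [Module R M]
    {d : ℕ} (σ : Equiv.Perm (Fin d)) :
    (⨂[R] _ : Fin d, M) →ₗ[R] ⨂[R] _ : Fin d, M :=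
  PiTensorProduct.lift ((PiTensorProduct.tprod R).domDomCongr σ)

@[simp] theorem placePerm_tprod (R : Type*) [CommRing R] (M : Type*) [AddCommGroup M]
    [Module R M] {d : ℕ} (σ : Equiv.Perm (Fin d)) (m : Fin d → M) :
    placePerm R M σ (PiTensorProduct.tprod R m) = PiTensorProduct.tprod R fun i => m (σ i) :=
  PiTensorProduct.lift.tprod m

/-- The operator on `M^{⊗d}` given by the (right, place-permutation) action of an element
`x` of the group ring `ℤ[𝔖_d]`: the element `σ` acts as `P_σ`, extended `ℤ`-linearly. -/
noncomputable def algAct (R : Type*) [CommRing R] (M : Type*) [AddCommGroup M] [Module R M]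
    {d : ℕ} (x : MonoidAlgebra ℤ (Equiv.Perm (Fin d))) :
    (⨂[R] _ : Fin d, M) →ₗ[R] ⨂[R] _ : Fin d, M :=
  x.coeff.sum fun σ n => n • placePerm R M σ

/-- The Weyl module (Schur functor) `𝕊_μ M`: the image `M^{⊗d}·c_μ` of `M^{⊗d}` under the
action of the Young symmetrizer `c_μ`. -/
noncomputable def weylModule (R : Type*) [CommRing R] (M : Type*) [AddCommGroup M] [Module R M]
    {d : ℕ} (μ : Nat.Partition d) : Submodule R (⨂[R] _ : Fin d, M) :=
  LinearMap.range (algAct R M (youngSymmetrizer μ))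

theorem map_comp_placePerm (R : Type*) [CommRing R] (M M' : Type*) [AddCommGroup M]
    [Module R M] [AddCommGroup M'] [Module R M'] {d : ℕ} (φ : M →ₗ[R] M')
    (σ : Equiv.Perm (Fin d)) :
    (PiTensorProduct.map fun _ : Fin d => φ) ∘ₗ placePerm R M σ
      = placePerm R M' σ ∘ₗ (PiTensorProduct.map fun _ : Fin d => φ) := by
  ext m
  simp [placePerm, MultilinearMap.domDomCongr]

theorem map_comp_algAct (R : Type*) [CommRing R] (M M' : Type*) [AddCommGroup M]
    [Module R M] [AddCommGroup M'] [Module R M'] {d : ℕ} (φ : M →ₗ[R] M')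
    (x : MonoidAlgebra ℤ (Equiv.Perm (Fin d))) :
    (PiTensorProduct.map fun _ : Fin d => φ) ∘ₗ algAct R M x
      = algAct R M' x ∘ₗ (PiTensorProduct.map fun _ : Fin d => φ) := by
  unfold algAct
  refine LinearMap.ext fun v => ?_
  rw [Finsupp.sum, Finsupp.sum]
  simp only [LinearMap.comp_apply, LinearMap.sum_apply, map_sum, LinearMap.smul_apply,
    map_zsmul]
  refine Finset.sum_congr rfl fun a _ => ?_
  have h := LinearMap.congr_fun (map_comp_placePerm R M M' φ a) v
  simp only [LinearMap.comp_apply] at h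
  have e1 := map_zsmul (LinearMap.applyₗ (R := R) v) (x.coeff a) (placePerm R M a)
  have e2 := map_zsmul (LinearMap.applyₗ (R := R) ((PiTensorProduct.map fun _ : Fin d => φ) v))
    (x.coeff a) (placePerm R M' a)
  simp only [LinearMap.applyₗ_apply_apply] at e1 e2
  rw [e1, e2, map_zsmul, h]

/-- A linear map `φ : M → M'` induces, via its `d`-th tensor power, a map
`𝕊_μ M → 𝕊_μ M'` between the Weyl modules. -/
theorem weylModule_stable (R : Type*) [CommRing R] (M M' : Type*) [AddCommGroup M]
    [Module R M] [AddCommGroup M'] [Module R M'] {d : ℕ} (μ : Nat.Partition d)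
    (φ : M →ₗ[R] M') :
    ∀ x ∈ weylModule R M μ, (PiTensorProduct.map fun _ : Fin d => φ) x ∈ weylModule R M' μ := by
  rintro x ⟨y, rfl⟩
  exact ⟨(PiTensorProduct.map fun _ : Fin d => φ) y,
    (LinearMap.congr_fun (map_comp_algAct R M M' φ (youngSymmetrizer μ)) y).symm⟩

/-- The endomorphism of the Weyl module `𝕊_μ M` induced by an endomorphism `f` of `M`:
the restriction of `f^{⊗d}` to the submodule `𝕊_μ M ⊆ M^{⊗d}`. -/
noncomputable def schurMap (R : Type*) [CommRing R] (M : Type*) [AddCommGroup M] [Module R M]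
    {d : ℕ} (μ : Nat.Partition d) (f : M →ₗ[R] M) :
    weylModule R M μ →ₗ[R] weylModule R M μ :=
  (PiTensorProduct.map fun _ : Fin d => f).restrict (weylModule_stable R M M μ f)

/-- The map `𝕊_μ M → 𝕊_μ M'` induced by a linear map `φ : M → M'`. -/
noncomputable def weylMap (R : Type*) [CommRing R] (M M' : Type*) [AddCommGroup M]
    [Module R M] [AddCommGroup M'] [Module R M'] {d : ℕ} (μ : Nat.Partition d)
    (φ : M →ₗ[R] M') : weylModule R M μ →ₗ[R] weylModule R M' μ :=
  (PiTensorProduct.map fun _ : Fin d => φ).restrict (weylModule_stable R M M' μ φ)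


/-! ### Auxiliary machinery -/

section CycleSum

variable {F : Type*} [CommRing F] {n : ℕ}

noncomputable def ZSum (A : Matrix (Fin n) (Fin n) F)
    {ι : Type} [Fintype ι] [DecidableEq ι] (σ : Equiv.Perm ι) (w : ι → ℕ) : F :=
  ∑ m : ι → Fin n, ∏ j, (A ^ w j) (m j) (m (σ j))

theorem prod_split {α : Type*} [Fintype α] [DecidableEq α] (a : α) (g : α → F) :
    ∏ j, g j = g a * ∏ j : {x // x ≠ a}, g j := by
  rw [← Finset.mul_prod_erase Finset.univ g (Finset.mem_univ a)]
  congr 1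
  exact Finset.prod_subtype (Finset.univ.erase a) (fun x => by simp) g

theorem sum_split {ι : Type} [Fintype ι] [DecidableEq ι] (i : ι) (φ : (ι → Fin n) → F) :
    ∑ m : ι → Fin n, φ m
      = ∑ v : Fin n, ∑ m' : {j : ι // j ≠ i} → Fin n,
          φ ((Equiv.funSplitAt i (Fin n)).symm (v, m')) := by
  rw [← Equiv.sum_comp (Equiv.funSplitAt i (Fin n)).symm φ, Fintype.sum_prod_type]

theorem ne_iff_of_fix {ι : Type} (σ : Equiv.Perm ι) {i : ι} (h : σ i = i) :
    ∀ x, x ≠ i ↔ σ x ≠ i := by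
  intro x
  constructor
  · intro hx hc; exact hx (σ.injective (hc.trans h.symm))
  · intro hx hc; exact hx (by rw [hc, h])

theorem ZSum_fix (A : Matrix (Fin n) (Fin n) F) {ι : Type} [Fintype ι] [DecidableEq ι]
    (σ : Equiv.Perm ι) (w : ι → ℕ) (i : ι) (h : σ i = i) :
    ZSum A σ w = (A ^ w i).trace
      * ZSum A (σ.subtypePerm (fun x => (ne_iff_of_fix σ h x).symm)) (fun j : {j : ι // j ≠ i} => w j) := by
  rw [ZSum, sum_split i]
  have key : ∀ (v : Fin n) (m' : {j : ι // j ≠ i} → Fin n),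
      (∏ j, (A ^ w j) (((Equiv.funSplitAt i (Fin n)).symm (v, m')) j)
        (((Equiv.funSplitAt i (Fin n)).symm (v, m')) (σ j)))
      = (A ^ w i) v v *
        ∏ j : {j : ι // j ≠ i}, (A ^ w (j : ι)) (m' j)
          (m' (σ.subtypePerm (fun x => (ne_iff_of_fix σ h x).symm) j)) := by
    intro v m'
    rw [prod_split i]
    congr 1
    · simp [h]
    · refine Finset.prod_congr rfl fun j _ => ?_
      have h1 : ((Equiv.funSplitAt i (Fin n)).symm (v, m')) (j : ι) = m' j := by
        simp [j.2]
      have h2 : ((Equiv.funSplitAt i (Fin n)).symm (v, m')) (σ (j : ι))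
          = m' (σ.subtypePerm (fun x => (ne_iff_of_fix σ h x).symm) j) := by
        have : σ (j : ι) ≠ i := (ne_iff_of_fix σ h _).1 j.2
        simp [this, Equiv.Perm.subtypePerm_apply]
      rw [h1, h2]
  simp_rw [key]
  rw [← Finset.sum_mul_sum]
  congr 1

/-- The spliced permutation at a non-fixed point `i`. -/
theorem splice_fix {ι : Type} [DecidableEq ι] (σ : Equiv.Perm ι) (i : ι) :
    (Equiv.swap i (σ i) * σ) i = i := by
  simp [Equiv.Perm.mul_apply]

noncomputable def splicePerm {ι : Type} [DecidableEq ι] (σ : Equiv.Perm ι) (i : ι) :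
    Equiv.Perm {j : ι // j ≠ i} :=
  (Equiv.swap i (σ i) * σ).subtypePerm fun x => (ne_iff_of_fix _ (splice_fix σ i) x).symm

theorem ZSum_splice (A : Matrix (Fin n) (Fin n) F) {ι : Type} [Fintype ι] [DecidableEq ι]
    (σ : Equiv.Perm ι) (w : ι → ℕ) (i : ι) (h : σ i ≠ i) :
    ZSum A σ w = ZSum A (splicePerm σ i)
      (fun j => if (j : ι) = σ⁻¹ i then w j + w i else w j) := by
  have hpi : σ⁻¹ i ≠ i := fun hc => h (by conv_lhs => rw [← hc, ← Equiv.Perm.mul_apply, mul_inv_cancel, Equiv.Perm.one_apply])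
  have hσi : σ i ≠ i := h
  have hσne : ∀ j : ι, j ≠ σ⁻¹ i → σ j ≠ i := fun j hj hc =>
    hj (by rw [← hc, ← Equiv.Perm.mul_apply, inv_mul_cancel, Equiv.Perm.one_apply])
  have hsplice_p : (splicePerm σ i) ⟨σ⁻¹ i, hpi⟩ = ⟨σ i, hσi⟩ := by
    refine Subtype.ext ?_
    simp [splicePerm, Equiv.Perm.subtypePerm_apply, Equiv.Perm.mul_apply]
  have hsplice : ∀ (j : ι) (hj : j ≠ i) (hj2 : j ≠ σ⁻¹ i),
      (splicePerm σ i) ⟨j, hj⟩ = ⟨σ j, hσne j hj2⟩ := by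
    intro j hj hj2
    refine Subtype.ext ?_
    simp only [splicePerm, Equiv.Perm.subtypePerm_apply, Equiv.Perm.mul_apply]
    exact Equiv.swap_apply_of_ne_of_ne (hσne j hj2) (fun hc => hj (σ.injective hc))
  set e := (Equiv.funSplitAt i (Fin n)).symm with he
  rw [ZSum, sum_split i, Finset.sum_comm, ZSum]
  refine Finset.sum_congr rfl fun m' _ => ?_
  have hev : ∀ (v : Fin n), (e (v, m')) i = v := by intro v; simp [he]
  have hem : ∀ (v : Fin n) (j : ι) (hj : j ≠ i), (e (v, m')) j = m' ⟨j, hj⟩ := by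
    intro v j hj; simp [he, hj]
  -- the v-independent tail product
  set D : {x : {j : ι // j ≠ i} // x ≠ ⟨σ⁻¹ i, hpi⟩} → F :=
    fun j => (A ^ w ((j : {j : ι // j ≠ i}) : ι)) (m' j) (m' ((splicePerm σ i) j)) with hD
  have key : ∀ v : Fin n,
      (∏ j, (A ^ w j) ((e (v, m')) j) ((e (v, m')) (σ j)))
      = ((A ^ w (σ⁻¹ i)) (m' ⟨σ⁻¹ i, hpi⟩) v * (A ^ w i) v (m' ⟨σ i, hσi⟩)) * ∏ j, D j := by
    intro v
    rw [prod_split i, prod_split (⟨σ⁻¹ i, hpi⟩ : {j : ι // j ≠ i})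
      (fun j : {j : ι // j ≠ i} => (A ^ w (j : ι)) ((e (v, m')) (j : ι)) ((e (v, m')) (σ (j : ι))))]
    rw [mul_left_comm, ← mul_assoc]
    congr 1
    · -- the two distinguished factors
      rw [hev, hem v (σ i) hσi, hem v (σ⁻¹ i) hpi, ← Equiv.Perm.mul_apply, mul_inv_cancel, Equiv.Perm.one_apply, hev]
    · -- tail factors
      refine Finset.prod_congr rfl fun j _ => ?_
      have hj1 : ((j : {j : ι // j ≠ i}) : ι) ≠ i := (j : {j : ι // j ≠ i}).2
      have hj2 : ((j : {j : ι // j ≠ i}) : ι) ≠ σ⁻¹ i := fun hc => j.2 (Subtype.ext hc)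
      have h3 : (splicePerm σ i) (↑j) = ⟨σ ↑↑j, hσne _ hj2⟩ := by
        have h4 := hsplice ↑↑j hj1 hj2
        rwa [Subtype.coe_eta] at h4
      rw [hem v _ hj1, hem v _ (hσne _ hj2)]
      simp only [hD, h3, Subtype.coe_eta]
  rw [he] at key
  simp_rw [key]
  rw [← Finset.sum_mul, ← Matrix.mul_apply, ← pow_add]
  -- now match with the RHS product split at ⟨σ⁻¹ i, hpi⟩
  rw [prod_split (⟨σ⁻¹ i, hpi⟩ : {j : ι // j ≠ i})]
  rw [hsplice_p]
  simp only [if_pos rfl]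
  congr 1
  refine Finset.prod_congr rfl fun j _ => ?_
  have hj2 : ((j : {j : ι // j ≠ i}) : ι) ≠ σ⁻¹ i := fun hc => j.2 (Subtype.ext hc)
  rw [hD, if_neg hj2]

theorem ZSum_isEmpty (A : Matrix (Fin n) (Fin n) F) {ι : Type} [Fintype ι] [DecidableEq ι]
    [IsEmpty ι] (σ : Equiv.Perm ι) (w : ι → ℕ) : ZSum A σ w = 1 := by
  simp [ZSum]

theorem card_ne_lt {ι : Type} [Fintype ι] [DecidableEq ι] (i : ι) :
    Fintype.card {j : ι // j ≠ i} = Fintype.card ι - 1 := by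
  have : Fintype.card {j : ι // ¬ j = i} = Fintype.card ι - Fintype.card {j : ι // j = i} :=
    Fintype.card_subtype_compl _
  simpa [Fintype.card_subtype_eq] using this

theorem ZSum_congr (A A' : Matrix (Fin n) (Fin n) F)
    (h : ∀ k : ℕ, (A ^ k).trace = (A' ^ k).trace) :
    ∀ (N : ℕ) (ι : Type) [Fintype ι] [DecidableEq ι], Fintype.card ι ≤ N →
      ∀ (σ : Equiv.Perm ι) (w : ι → ℕ), ZSum A σ w = ZSum A' σ w := by
  intro N
  induction N with
  | zero =>
    intro ι _ _ hc σ w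
    have : IsEmpty ι := Fintype.card_eq_zero_iff.mp (Nat.le_zero.mp hc)
    rw [ZSum_isEmpty, ZSum_isEmpty]
  | succ N ih =>
    intro ι _ _ hc σ w
    by_cases hE : IsEmpty ι
    · rw [ZSum_isEmpty, ZSum_isEmpty]
    · have : Nonempty ι := not_isEmpty_iff.mp hE
      obtain ⟨i⟩ := this
      have hcard : Fintype.card {j : ι // j ≠ i} ≤ N := by
        rw [card_ne_lt i]
        have h1 : 1 ≤ Fintype.card ι := Fintype.card_pos_iff.mpr ⟨i⟩
        omega
      by_cases hfix : σ i = i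
      · rw [ZSum_fix A σ w i hfix, ZSum_fix A' σ w i hfix, h,
          ih _ hcard (σ.subtypePerm fun x => (ne_iff_of_fix σ hfix x).symm) _]
      · rw [ZSum_splice A σ w i hfix, ZSum_splice A' σ w i hfix,
          ih _ hcard (splicePerm σ i) _]

end CycleSum

section TensorBasis

variable {F : Type*} [Field F] {n d : ℕ}

/-- The standard basis vectors of the tensor power of `Fin n → F`. -/
noncomputable def tpb (F : Type*) [Field F] (n d : ℕ) (m : Fin d → Fin n) :
    ⨂[F] _ : Fin d, (Fin n → F) :=
  PiTensorProduct.tprod F fun i => Pi.basisFun F (Fin n) (m i)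

/-- Coordinate functionals. -/
noncomputable def tpc (F : Type*) [Field F] (n d : ℕ) (m : Fin d → Fin n) :
    (⨂[F] _ : Fin d, (Fin n → F)) →ₗ[F] F :=
  PiTensorProduct.lift
    ((MultilinearMap.mkPiAlgebra F (Fin d) F).compLinearMap fun i => LinearMap.proj (m i))

theorem tpc_tprod (m : Fin d → Fin n) (u : Fin d → (Fin n → F)) :
    tpc F n d m (PiTensorProduct.tprod F u) = ∏ i, u i (m i) := by
  simp [tpc]

theorem tprod_expand (u : Fin d → (Fin n → F)) :
    PiTensorProduct.tprod F u
      = ∑ m : Fin d → Fin n, (∏ i, u i (m i)) • tpb F n d m := by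
  have hu : u = fun i => ∑ k, u i k • Pi.basisFun F (Fin n) k := by
    funext i
    ext j
    simp [Pi.single_apply]
  conv_lhs => rw [hu]
  rw [MultilinearMap.map_sum]
  refine Finset.sum_congr rfl fun m _ => ?_
  rw [MultilinearMap.map_smul_univ]
  rfl

theorem tpc_tpb (m m' : Fin d → Fin n) :
    tpc F n d m (tpb F n d m') = if m' = m then 1 else 0 := by
  rw [tpb, tpc_tprod]
  by_cases h : m' = m
  · subst h; simp
  · rw [if_neg h]
    obtain ⟨i, hi⟩ := Function.ne_iff.mp h
    refine Finset.prod_eq_zero (Finset.mem_univ i) ?_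
    simp [Pi.single_apply, hi]

/-- Basis of the tensor power. -/
noncomputable def tensorBasis (F : Type*) [Field F] (n d : ℕ) :
    Module.Basis (Fin d → Fin n) F (⨂[F] _ : Fin d, (Fin n → F)) := by
  refine Module.Basis.mk (v := tpb F n d) ?_ ?_
  · rw [Fintype.linearIndependent_iff]
    intro g hg m
    have := congrArg (tpc F n d m) hg
    rw [map_sum, map_zero] at this
    simpa [tpc_tpb] using this
  · rw [← PiTensorProduct.span_tprod_eq_top]
    refine Submodule.span_le.mpr ?_
    rintro x ⟨u, rfl⟩
    rw [tprod_expand]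
    exact Submodule.sum_mem _ fun m _ =>
      Submodule.smul_mem _ _ (Submodule.subset_span ⟨m, rfl⟩)

theorem trace_map_placePerm (A : Matrix (Fin n) (Fin n) F) (σ : Equiv.Perm (Fin d)) :
    LinearMap.trace F _
        ((PiTensorProduct.map fun _ : Fin d => Matrix.toLin' A) ∘ₗ placePerm F (Fin n → F) σ)
      = ∑ m : Fin d → Fin n, ∏ i, A (m i) (m (σ i)) := by
  classical
  rw [LinearMap.trace_eq_matrix_trace F (tensorBasis F n d), Matrix.trace]
  refine Finset.sum_congr rfl fun m _ => ?_
  rw [Matrix.diag_apply, LinearMap.toMatrix_apply]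
  have h1 : (tensorBasis F n d) m = tpb F n d m := Module.Basis.mk_apply _ _ _
  rw [h1, tpb, LinearMap.comp_apply, placePerm_tprod, PiTensorProduct.map_tprod]
  have h2 : (fun i => Matrix.toLin' A (Pi.basisFun F (Fin n) (m (σ i))))
      = fun i => A.mulVec (Pi.single (m (σ i)) 1) := by
    funext i; simp [Matrix.toLin'_apply]
  rw [h2]
  rw [tprod_expand]
  rw [map_sum]
  have hb : ∀ m' : Fin d → Fin n, tpb F n d m' = tensorBasis F n d m' :=
    fun m' => (Module.Basis.mk_apply _ _ _).symm
  have h3 : ∀ m' : Fin d → Fin n,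
      ((tensorBasis F n d).repr ((∏ i, (A.mulVec (Pi.single (m (σ i)) 1)) (m' i)) • tpb F n d m')) m
        = (∏ i, (A.mulVec (Pi.single (m (σ i)) 1)) (m' i)) * (if m' = m then 1 else 0) := by
    intro m'
    rw [map_smul, hb m', Module.Basis.repr_self]
    simp [Finsupp.single_apply]
  rw [Finset.sum_apply']
  simp_rw [h3]
  simp [Matrix.mulVec_single, mul_ite]

end TensorBasis

/-- Existence of an idempotent generator for the left ideal generated by `c`. -/
theorem exists_idem' (F : Type*) [Field F] [CharZero F] (G : Type) [Group G] [Fintype G]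
    (c : MonoidAlgebra F G) :
    ∃ e : MonoidAlgebra F G, e * e = e ∧ c * e = c ∧ ∃ r, e = r * c := by
  let Gu := ULift.{u_1} G
  let Ψ : MonoidAlgebra F G ≃ₐ[F] MonoidAlgebra F Gu :=
    MonoidAlgebra.domCongr F F MulEquiv.ulift.symm
  haveI : NeZero ((Fintype.card Gu : F)) :=
    ⟨Nat.cast_ne_zero.mpr Fintype.card_ne_zero⟩
  set R := MonoidAlgebra F Gu with hR
  let p : Submodule R R := Submodule.span R {Ψ c}
  obtain ⟨q, hq⟩ := MonoidAlgebra.Submodule.exists_isCompl p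
  let π : R →ₗ[R] p := p.linearProjOfIsCompl q hq
  set eu : R := ((π 1 : p) : R) with heu_def
  have heu : eu ∈ p := (π 1).2
  have h1 : ∀ x ∈ p, x * eu = x := by
    intro x hx
    have h2 : π x = ⟨x, hx⟩ := Submodule.linearProjOfIsCompl_apply_left hq ⟨x, hx⟩
    have h3 : π x = x • π 1 := by
      conv_lhs => rw [show x = x • (1 : R) from ((smul_eq_mul x (1 : R)).trans (mul_one x)).symm]
      exact map_smul π x 1
    have := congrArg (Subtype.val) (h3.symm.trans h2)
    simpa [smul_eq_mul] using this
  refine ⟨Ψ.symm eu, ?_, ?_, ?_⟩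
  · have := h1 eu heu
    have h4 := congrArg Ψ.symm this
    rwa [map_mul] at h4
  · have := h1 (Ψ c) (Submodule.subset_span rfl)
    have h4 := congrArg Ψ.symm this
    rwa [map_mul, AlgEquiv.symm_apply_apply] at h4
  · obtain ⟨r, hr⟩ := Submodule.mem_span_singleton.mp heu
    refine ⟨Ψ.symm r, ?_⟩
    have := congrArg Ψ.symm hr.symm
    rwa [smul_eq_mul, map_mul, AlgEquiv.symm_apply_apply] at this

/-- Trace of the restriction of `T` to the range of an idempotent `π`. -/
theorem trace_restrict_of_proj (F V : Type*) [Field F] [AddCommGroup V] [Module F V]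
    [Module.Finite F V] (W : Submodule F V) (T π : V →ₗ[F] V) (hπ : π ∘ₗ π = π)
    (hrange : LinearMap.range π = W) (hT : ∀ x ∈ W, T x ∈ W) :
    LinearMap.trace F W (T.restrict hT) = LinearMap.trace F V (T ∘ₗ π) := by
  have hmem : ∀ x : V, (T ∘ₗ π) x ∈ W := fun x =>
    hT _ (hrange ▸ LinearMap.mem_range_self π x)
  let q : V →ₗ[F] W := LinearMap.codRestrict W (T ∘ₗ π) hmem
  have h1 : W.subtype ∘ₗ q = T ∘ₗ π := by ext x; rfl
  have hid : ∀ w ∈ W, π w = w := by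
    intro w hw
    obtain ⟨y, rfl⟩ : ∃ y, π y = w := by rwa [← LinearMap.mem_range, hrange]
    exact LinearMap.congr_fun hπ y
  have h2 : q ∘ₗ W.subtype = T.restrict hT := by
    ext w
    have : π (w : V) = (w : V) := hid _ w.2
    simp [q, LinearMap.restrict_apply, this]
  rw [← h1, LinearMap.trace_comp_comm', h2]

section AlgActF
variable (F : Type*) [Field F] (M : Type*) [AddCommGroup M] [Module F M] {d : ℕ}

noncomputable def algActF (y : MonoidAlgebra F (Equiv.Perm (Fin d))) :
    (⨂[F] _ : Fin d, M) →ₗ[F] ⨂[F] _ : Fin d, M :=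
  y.coeff.sum fun σ a => a • placePerm F M σ

theorem algActF_single (σ : Equiv.Perm (Fin d)) (a : F) :
    algActF F M (MonoidAlgebra.single σ a) = a • placePerm F M σ := by
  rw [algActF, MonoidAlgebra.sum_single_index]
  rw [zero_smul]

theorem algActF_add (x y : MonoidAlgebra F (Equiv.Perm (Fin d))) :
    algActF F M (x + y) = algActF F M x + algActF F M y := by
  rw [algActF, MonoidAlgebra.coeff_add, Finsupp.sum_add_index, algActF, algActF]
  · intro σ _; rw [zero_smul]
  · intro σ _ a b; rw [add_smul]

theorem placePerm_mul (σ τ : Equiv.Perm (Fin d)) :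
    placePerm F M (σ * τ) = placePerm F M τ ∘ₗ placePerm F M σ := by
  ext m
  simp [Equiv.Perm.mul_apply]

theorem algActF_mul (x y : MonoidAlgebra F (Equiv.Perm (Fin d))) :
    algActF F M (x * y) = algActF F M y ∘ₗ algActF F M x := by
  induction x using MonoidAlgebra.induction_linear with
  | zero => rw [zero_mul]; simp [algActF]
  | add x1 x2 h1 h2 =>
    rw [add_mul, algActF_add, h1, h2, algActF_add]
    ext v; simp
  | single σ a =>
    induction y using MonoidAlgebra.induction_linear with
    | zero => rw [mul_zero]; simp [algActF]
    | add y1 y2 h1 h2 =>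
      rw [mul_add, algActF_add, h1, h2, algActF_add]
      ext v; simp
    | single τ b =>
      rw [MonoidAlgebra.single_mul_single, algActF_single, algActF_single, algActF_single,
        placePerm_mul]
      ext v
      simp [mul_comm, mul_smul]
      exact smul_comm _ _ _

theorem algAct_eq_algActF (x : MonoidAlgebra ℤ (Equiv.Perm (Fin d))) :
    algAct F M x
      = algActF F M (MonoidAlgebra.ofCoeff (Finsupp.mapRange Int.cast Int.cast_zero x.coeff)) := by
  rw [algAct, algActF, MonoidAlgebra.coeff_ofCoeff,
    Finsupp.sum_mapRange_index (h := fun σ (a : F) => a • placePerm F M σ) (fun _ => zero_smul F _)]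
  exact Finsupp.sum_congr fun σ _ => (Int.cast_smul_eq_zsmul F _ _).symm

end AlgActF

theorem trace_schur_key (d n : ℕ) (μ : Nat.Partition d) (F : Type*) [Field F] [CharZero F]
    (A A' : Matrix (Fin n) (Fin n) F)
    (h : ∀ k : ℕ, (A ^ k).trace = (A' ^ k).trace) :
    LinearMap.trace F (weylModule F (Fin n → F) μ) (schurMap F (Fin n → F) μ (Matrix.toLin' A))
      = LinearMap.trace F (weylModule F (Fin n → F) μ)
          (schurMap F (Fin n → F) μ (Matrix.toLin' A')) := by
  classical
  haveI : Module.Finite F (⨂[F] _ : Fin d, (Fin n → F)) :=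
    Module.Finite.of_basis (tensorBasis F n d)
  set cF : MonoidAlgebra F (Equiv.Perm (Fin d)) :=
    MonoidAlgebra.ofCoeff (Finsupp.mapRange Int.cast Int.cast_zero (youngSymmetrizer μ).coeff)
      with hcF
  obtain ⟨e, he1, he2, r, he3⟩ := exists_idem' F (Equiv.Perm (Fin d)) cF
  set π := algActF F (Fin n → F) e with hπdef
  have hπ : π ∘ₗ π = π := by
    have h5 := algActF_mul F (Fin n → F) e e
    rw [he1] at h5
    exact h5.symm
  have hW : weylModule F (Fin n → F) μ = LinearMap.range (algActF F (Fin n → F) cF) := by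
    rw [weylModule, algAct_eq_algActF]
  have hrange : LinearMap.range π = weylModule F (Fin n → F) μ := by
    apply le_antisymm
    · rw [hW, hπdef, he3, algActF_mul]
      exact LinearMap.range_comp_le_range _ _
    · rw [hW]
      have h6 : algActF F (Fin n → F) cF = π ∘ₗ algActF F (Fin n → F) cF := by
        rw [hπdef, ← algActF_mul, he2]
      rw [h6]
      exact LinearMap.range_comp_le_range _ _
  have step : ∀ B : Matrix (Fin n) (Fin n) F,
      LinearMap.trace F (weylModule F (Fin n → F) μ) (schurMap F (Fin n → F) μ (Matrix.toLin' B))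
        = ∑ σ ∈ e.coeff.support, e.coeff σ * (∑ m : Fin d → Fin n, ∏ i, B (m i) (m (σ i))) := by
    intro B
    have h0 : schurMap F (Fin n → F) μ (Matrix.toLin' B)
        = (PiTensorProduct.map fun _ : Fin d => Matrix.toLin' B).restrict
            (weylModule_stable F (Fin n → F) (Fin n → F) μ (Matrix.toLin' B)) := rfl
    rw [h0, trace_restrict_of_proj F _ (weylModule F (Fin n → F) μ) _ π hπ hrange]
    have hTπ : (PiTensorProduct.map fun _ : Fin d => Matrix.toLin' B) ∘ₗ π
        = ∑ σ ∈ e.coeff.support, e.coeff σ •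
            ((PiTensorProduct.map fun _ : Fin d => Matrix.toLin' B) ∘ₗ
              placePerm F (Fin n → F) σ) := by
      ext v
      simp [hπdef, algActF, Finsupp.sum, LinearMap.sum_apply]
    rw [hTπ, map_sum]
    refine Finset.sum_congr rfl fun σ _ => ?_
    rw [map_smul, smul_eq_mul, trace_map_placePerm]
  rw [step A, step A']
  refine Finset.sum_congr rfl fun σ _ => ?_
  congr 1
  have hZ := ZSum_congr A A' h d (Fin d) (le_of_eq (Fintype.card_fin d)) σ (fun _ => 1)
  simpa [ZSum, pow_one] using hZ

/-- Over a field `F` of characteristic zero, two representations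
`ρ, ρ' : G → GL_n(F)` with equal traces have Weyl modules `𝕊_μρ, 𝕊_μρ'` with equal traces. -/
theorem trace_schur_eq_of_trace_eq (d : ℕ) (hd : 0 < d) (μ : Nat.Partition d)
    (F : Type*) [Field F] [CharZero F] (G : Type*) [Group G] (n : ℕ)
    (ρ ρ' : G →* (Matrix (Fin n) (Fin n) F)ˣ)
    (htr : ∀ g : G, ((ρ g : Matrix (Fin n) (Fin n) F)).trace
        = ((ρ' g : Matrix (Fin n) (Fin n) F)).trace) :
    ∀ g : G,
      LinearMap.trace F (weylModule F (Fin n → F) μ)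
          (schurMap F (Fin n → F) μ (Matrix.toLin' (ρ g : Matrix (Fin n) (Fin n) F)))
        = LinearMap.trace F (weylModule F (Fin n → F) μ)
          (schurMap F (Fin n → F) μ (Matrix.toLin' (ρ' g : Matrix (Fin n) (Fin n) F))) := by
  intro g
  have hpow : ∀ k : ℕ,
      (((ρ g : Matrix (Fin n) (Fin n) F)) ^ k).trace
        = (((ρ' g : Matrix (Fin n) (Fin n) F)) ^ k).trace := by
    intro k
    have h1 : ((ρ g : Matrix (Fin n) (Fin n) F)) ^ k = ((ρ (g ^ k) : Matrix (Fin n) (Fin n) F)) := by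
      rw [map_pow]
      exact (Units.val_pow_eq_pow_val _ _).symm
    have h2 : ((ρ' g : Matrix (Fin n) (Fin n) F)) ^ k
        = ((ρ' (g ^ k) : Matrix (Fin n) (Fin n) F)) := by
      rw [map_pow]
      exact (Units.val_pow_eq_pow_val _ _).symm
    rw [h1, h2]
    exact htr (g ^ k)
  exact trace_schur_key d n μ F _ _ hpow
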